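/- Fix x ∈ ℝ^d with ‖x‖ = 1, γ ∈ (0,1), and a constant C_0 > 0. There is a universal constant C > 0 (e.g. C = 12) such that if m ≥ C·log(2/γ), then with probability at least 1 − γ over the random initialization (W_0, a), the bound |f(x; a, W)| ≤ 2·√(log(2/γ)) + C_0 holds simultaneously for all W ∈ B_{2,∞}(W_0, C_0/√m). -/

import Mathlib

open MeasureTheory ProbabilityTheory

/-- Product of `d` i.i.d. standard Gaussians: the law of a standard Gaussian
vector `N(0, I_d)` on `ℝ^d` (represented as `Fin d → ℝ`). -/
noncomputable def gaussVec (d : ℕ) : Measure (Fin d → ℝ) :=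
  Measure.pi fun _ => gaussianReal 0 1

/-- Law of `m` i.i.d. standard Gaussian vectors in `ℝ^d` (the initialization `W₀`). -/
noncomputable def gaussMat (m d : ℕ) : Measure (Fin m → Fin d → ℝ) :=
  Measure.pi fun _ => gaussVec d

/-- Law of `m` i.i.d. uniform random signs (encoded as booleans). -/
noncomputable def signsMeasure (m : ℕ) : Measure (Fin m → Bool) :=
  Measure.pi fun _ => (PMF.uniformOfFintype Bool).toMeasure

/-- Joint law of the random initialization `(W₀, a)`. -/
noncomputable def initMeasure (m d : ℕ) :
    Measure ((Fin m → Fin d → ℝ) × (Fin m → Bool)) :=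
  (gaussMat m d).prod (signsMeasure m)

/-- The sign `±1` encoded by a boolean. -/
def signOf (b : Bool) : ℝ := if b then 1 else -1

/-- Euclidean inner product on `Fin d → ℝ`. -/
def dotp {d : ℕ} (w x : Fin d → ℝ) : ℝ := ∑ i, w i * x i

/-- Euclidean norm on `Fin d → ℝ`. -/
noncomputable def euclNorm {d : ℕ} (w : Fin d → ℝ) : ℝ :=
  Real.sqrt (∑ i, (w i) ^ 2)

/-- Two-layer ReLU network `f(x; a, W) = (1/√m) ∑ₛ aₛ · max(0, ⟨wₛ, x⟩)`. -/
noncomputable def netF {m d : ℕ} (a : Fin m → Bool) (W : Fin m → Fin d → ℝ)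
    (x : Fin d → ℝ) : ℝ :=
  (1 / Real.sqrt m) * ∑ s, signOf (a s) * max 0 (dotp (W s) x)

/-- (a.e.) input gradient `G(x; a, W) = (1/√m) ∑ₛ aₛ · 𝟙[⟨wₛ, x⟩ > 0] · wₛ`. -/
noncomputable def netG {m d : ℕ} (a : Fin m → Bool) (W : Fin m → Fin d → ℝ)
    (x : Fin d → ℝ) : Fin d → ℝ :=
  fun i => (1 / Real.sqrt m) *
    ∑ s, signOf (a s) * (if 0 < dotp (W s) x then (1 : ℝ) else 0) * W s i

/-- `W ∈ B_{2,∞}(W₀, V)`: every column of `W` is within Euclidean distance `V`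
of the corresponding column of `W₀`. -/
def inBall {m d : ℕ} (W0 W : Fin m → Fin d → ℝ) (V : ℝ) : Prop :=
  ∀ s, euclNorm (fun i => W s i - W0 s i) ≤ V

open Real
open scoped ENNReal NNReal

instance (d : ℕ) : IsProbabilityMeasure (gaussVec d) := by
  unfold gaussVec; infer_instance

instance instGM (m d : ℕ) : IsProbabilityMeasure (gaussMat m d) := by
  unfold gaussMat; infer_instance
instance instSM (m : ℕ) : IsProbabilityMeasure (signsMeasure m) := by
  unfold signsMeasure; infer_instance
instance instIM (m d : ℕ) : IsProbabilityMeasure (initMeasure m d) := by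
  unfold initMeasure; infer_instance

lemma measurable_dotp {d : ℕ} (x : Fin d → ℝ) : Measurable (fun w : Fin d → ℝ => dotp w x) := by
  unfold dotp; exact Finset.measurable_sum _ fun i _ => (measurable_pi_apply i).mul_const _

lemma lintegral_pi_prod {α : Type*} [MeasurableSpace α] (μ : Measure α) [IsProbabilityMeasure μ] :
    ∀ (n : ℕ) (f : Fin n → α → ℝ≥0∞), (∀ i, Measurable (f i)) →
      ∫⁻ x : Fin n → α, ∏ i, f i (x i) ∂(Measure.pi fun _ => μ) = ∏ i, ∫⁻ y, f i y ∂μ := by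
  intro n
  induction n with
  | zero =>
    intro f hf
    simp
  | succ n ih =>
    intro f hf
    have hmp := measurePreserving_piFinSuccAbove (α := fun _ : Fin (n+1) => α) (fun _ => μ) 0
    calc ∫⁻ x : Fin (n+1) → α, ∏ i, f i (x i) ∂(Measure.pi fun _ => μ)
        = ∫⁻ y : α × (Fin n → α), f 0 y.1 * ∏ j : Fin n, f j.succ (y.2 j)
            ∂(μ.prod (Measure.pi fun _ : Fin n => μ)) := by
          rw [← hmp.map_eq, lintegral_map_equiv]
          refine lintegral_congr fun x => ?_
          rw [Fin.prod_univ_succ]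
          simp [MeasurableEquiv.piFinSuccAbove, Fin.insertNthEquiv, Fin.succAbove, Fin.tail]
      _ = (∫⁻ y, f 0 y ∂μ) * ∏ j : Fin n, ∫⁻ y, f j.succ y ∂μ := by
          rw [lintegral_prod_mul (f := f 0) (g := fun z : Fin n → α => ∏ j : Fin n, f j.succ (z j))
            (hf 0).aemeasurable
            (Finset.measurable_prod Finset.univ fun j _ =>
              (hf j.succ).comp (measurable_pi_apply j)).aemeasurable]
          rw [ih (fun j => f j.succ) (fun j => hf j.succ)]
      _ = ∏ i, ∫⁻ y, f i y ∂μ :=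
          (Fin.prod_univ_succ (fun i => ∫⁻ y, f i y ∂μ)).symm

lemma lintegral_unif_bool (f : Bool → ℝ≥0∞) :
    ∫⁻ b, f b ∂(PMF.uniformOfFintype Bool).toMeasure = (f true + f false) / 2 := by
  rw [MeasureTheory.lintegral_fintype]
  simp [PMF.toMeasure_apply_singleton _ _ (measurableSet_singleton _),
    PMF.uniformOfFintype_apply, ENNReal.div_eq_inv_mul, mul_comm, add_comm, add_mul]

lemma gauss_mgf (c : ℝ) :
    ∫⁻ t, ENNReal.ofReal (Real.exp (c * t)) ∂(gaussianReal 0 1) =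
      ENNReal.ofReal (Real.exp (c ^ 2 / 2)) := by
  have hkey : ∀ t : ℝ, gaussianPDFReal 0 1 t * Real.exp (c * t) =
      ((Real.sqrt (2 * π))⁻¹ * Real.exp (c ^ 2 / 2)) * Real.exp (-(1/2) * (t - c) ^ 2) := by
    intro t
    rw [gaussianPDFReal]
    push_cast
    rw [mul_one, mul_assoc, ← Real.exp_add, mul_assoc, ← Real.exp_add]
    congr 2
    ring
  have hint : Integrable (fun t => gaussianPDFReal 0 1 t * Real.exp (c * t)) := by
    simp_rw [hkey]
    exact ((integrable_exp_neg_mul_sq (by norm_num : (0:ℝ) < 1/2)).comp_sub_right c).const_mul _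
  rw [gaussianReal_of_var_ne_zero _ one_ne_zero,
    lintegral_withDensity_eq_lintegral_mul _ (measurable_gaussianPDF _ _)
      (show Measurable fun t : ℝ => ENNReal.ofReal (Real.exp (c * t)) by fun_prop)]
  have : ∀ t : ℝ, (gaussianPDF 0 1 * fun t => ENNReal.ofReal (Real.exp (c * t))) t =
      ENNReal.ofReal (gaussianPDFReal 0 1 t * Real.exp (c * t)) := by
    intro t
    simp [gaussianPDF, ENNReal.ofReal_mul (gaussianPDFReal_nonneg 0 1 t)]
  rw [lintegral_congr this, ← MeasureTheory.ofReal_integral_eq_lintegral_ofReal hint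
    (Filter.Eventually.of_forall fun t => mul_nonneg (gaussianPDFReal_nonneg 0 1 t) (Real.exp_nonneg _))]
  congr 1
  simp_rw [hkey]
  rw [integral_const_mul]
  have h1 : ∫ t : ℝ, Real.exp (-(1/2) * (t - c) ^ 2) = ∫ t : ℝ, Real.exp (-(1/2) * t ^ 2) :=
    integral_sub_right_eq_self (fun t => Real.exp (-(1/2) * t ^ 2)) c
  rw [h1, integral_gaussian]
  rw [mul_comm ((Real.sqrt (2*π))⁻¹) _, mul_assoc]
  have h2 : π / (1/2) = 2 * π := by ring
  rw [h2]
  have h3 : Real.sqrt (2*π) ≠ 0 := by positivity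
  rw [inv_mul_cancel₀ h3, mul_one]

lemma vec_mgf {d : ℕ} (x : Fin d → ℝ) (hx : ∑ i, x i ^ 2 = 1) (c : ℝ) :
    ∫⁻ w, ENNReal.ofReal (Real.exp (c * dotp w x)) ∂(gaussVec d) =
      ENNReal.ofReal (Real.exp (c ^ 2 / 2)) := by
  have h1 : ∀ w : Fin d → ℝ, ENNReal.ofReal (Real.exp (c * dotp w x)) =
      ∏ i, ENNReal.ofReal (Real.exp (c * x i * w i)) := by
    intro w
    rw [← ENNReal.ofReal_prod_of_nonneg (fun i _ => Real.exp_nonneg _), ← Real.exp_sum]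
    unfold dotp
    rw [Finset.mul_sum]
    congr 2
    exact Finset.sum_congr rfl fun i _ => by ring
  simp_rw [h1]
  unfold gaussVec
  rw [lintegral_pi_prod (gaussianReal 0 1) d
    (fun i t => ENNReal.ofReal (Real.exp (c * x i * t))) (fun i => by fun_prop)]
  have h2 : ∀ i, ∫⁻ t, ENNReal.ofReal (Real.exp (c * x i * t)) ∂(gaussianReal 0 1) =
      ENNReal.ofReal (Real.exp ((c * x i) ^ 2 / 2)) := fun i => gauss_mgf (c * x i)
  rw [Finset.prod_congr rfl (fun i _ => h2 i),
    ← ENNReal.ofReal_prod_of_nonneg (fun i _ => Real.exp_nonneg _), ← Real.exp_sum]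
  congr 1
  have : ∑ i, (c * x i) ^ 2 / 2 = (c ^ 2 / 2) * ∑ i, x i ^ 2 := by
    rw [Finset.mul_sum]
    exact Finset.sum_congr rfl fun i _ => by ring
  rw [this, hx, mul_one]

lemma measurable_S {m d : ℕ} (x : Fin d → ℝ) :
    Measurable (fun p : (Fin m → Fin d → ℝ) × (Fin m → Bool) =>
      ∑ s, signOf (p.2 s) * max 0 (dotp (p.1 s) x)) := by
  refine Finset.measurable_sum _ fun s _ => Measurable.mul ?_ ?_
  · exact (measurable_of_countable signOf).comp ((measurable_pi_apply s).comp measurable_snd)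
  · exact measurable_const.max ((measurable_dotp x).comp ((measurable_pi_apply s).comp measurable_fst))

lemma ofReal_half_add (A B : ℝ) (hA : 0 ≤ A) (hB : 0 ≤ B) :
    ENNReal.ofReal ((A + B) / 2) = (ENNReal.ofReal A + ENNReal.ofReal B) / 2 := by
  rw [ENNReal.ofReal_div_of_pos (by norm_num), ENNReal.ofReal_add hA hB]
  norm_num

lemma cosh_relu_le (u t : ℝ) :
    (Real.exp (u * max 0 t) + Real.exp (-(u * max 0 t))) / 2 ≤
      (Real.exp (u * t) + Real.exp (-(u * t))) / 2 := by
  rcases le_total t 0 with h | h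
  · rw [max_eq_left h]
    simp only [mul_zero, neg_zero, Real.exp_zero]
    nlinarith [Real.add_one_le_exp (u * t), Real.add_one_le_exp (-(u * t))]
  · rw [max_eq_right h]

lemma mgf_bound (d m : ℕ) (x : Fin d → ℝ) (hx : ∑ i, x i ^ 2 = 1) (l : ℝ) :
    ∫⁻ p : (Fin m → Fin d → ℝ) × (Fin m → Bool),
        ENNReal.ofReal (Real.exp (l * ∑ s, signOf (p.2 s) * max 0 (dotp (p.1 s) x)))
        ∂(initMeasure m d) ≤ ENNReal.ofReal (Real.exp (m * l ^ 2 / 2)) := by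
  have hjm : Measurable (fun p : (Fin m → Fin d → ℝ) × (Fin m → Bool) =>
      ENNReal.ofReal (Real.exp (l * ∑ s, signOf (p.2 s) * max 0 (dotp (p.1 s) x)))) :=
    ENNReal.measurable_ofReal.comp (Real.measurable_exp.comp ((measurable_S x).const_mul l))
  unfold initMeasure
  rw [lintegral_prod _ hjm.aemeasurable]
  -- inner integral over signs
  have hinner : ∀ W : Fin m → Fin d → ℝ,
      ∫⁻ a : Fin m → Bool,
          ENNReal.ofReal (Real.exp (l * ∑ s, signOf (a s) * max 0 (dotp (W s) x)))
          ∂(signsMeasure m)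
        = ∏ s : Fin m, ENNReal.ofReal ((Real.exp (l * max 0 (dotp (W s) x)) +
            Real.exp (-(l * max 0 (dotp (W s) x)))) / 2) := by
    intro W
    have hpt : ∀ a : Fin m → Bool,
        ENNReal.ofReal (Real.exp (l * ∑ s, signOf (a s) * max 0 (dotp (W s) x))) =
          ∏ s : Fin m, ENNReal.ofReal (Real.exp (l * (signOf (a s) * max 0 (dotp (W s) x)))) := by
      intro a
      rw [← ENNReal.ofReal_prod_of_nonneg (fun s _ => Real.exp_nonneg _), ← Real.exp_sum,
        Finset.mul_sum]
    simp_rw [hpt]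
    unfold signsMeasure
    rw [lintegral_pi_prod ((PMF.uniformOfFintype Bool).toMeasure) m
      (fun s b => ENNReal.ofReal (Real.exp (l * (signOf b * max 0 (dotp (W s) x)))))
      (fun s => measurable_of_countable _)]
    refine Finset.prod_congr rfl fun s _ => ?_
    rw [lintegral_unif_bool, ofReal_half_add _ _ (Real.exp_nonneg _) (Real.exp_nonneg _)]
    congr 2 <;> simp [signOf] <;> ring_nf
  simp_rw [hinner]
  -- bound cosh of relu by cosh
  have hmono : ∫⁻ W, ∏ s : Fin m, ENNReal.ofReal ((Real.exp (l * max 0 (dotp (W s) x)) +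
            Real.exp (-(l * max 0 (dotp (W s) x)))) / 2) ∂(gaussMat m d)
      ≤ ∫⁻ W, ∏ s : Fin m, ENNReal.ofReal ((Real.exp (l * dotp (W s) x) +
            Real.exp (-(l * dotp (W s) x))) / 2) ∂(gaussMat m d) := by
    refine lintegral_mono fun W => Finset.prod_le_prod' fun s _ =>
      ENNReal.ofReal_le_ofReal (cosh_relu_le l (dotp (W s) x))
  refine hmono.trans ?_
  -- product over gaussians
  unfold gaussMat
  rw [lintegral_pi_prod (gaussVec d) m
    (fun _ w => ENNReal.ofReal ((Real.exp (l * dotp w x) + Real.exp (-(l * dotp w x))) / 2))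
    (fun s => by
      have h1 : Measurable fun w : Fin d → ℝ => dotp w x := measurable_dotp x
      fun_prop)]
  -- single gaussian cosh integral
  have hsingle : ∫⁻ w, ENNReal.ofReal ((Real.exp (l * dotp w x) +
      Real.exp (-(l * dotp w x))) / 2) ∂(gaussVec d) = ENNReal.ofReal (Real.exp (l ^ 2 / 2)) := by
    have hpt : ∀ w : Fin d → ℝ, ENNReal.ofReal ((Real.exp (l * dotp w x) +
        Real.exp (-(l * dotp w x))) / 2) =
        2⁻¹ * (ENNReal.ofReal (Real.exp (l * dotp w x)) +
          ENNReal.ofReal (Real.exp ((-l) * dotp w x))) := by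
      intro w
      rw [ofReal_half_add _ _ (Real.exp_nonneg _) (Real.exp_nonneg _), ENNReal.div_eq_inv_mul,
        neg_mul]
    simp_rw [hpt]
    rw [lintegral_const_mul _ (by
      have h1 : Measurable fun w : Fin d → ℝ => dotp w x := measurable_dotp x
      fun_prop), lintegral_add_left (by
      have h1 : Measurable fun w : Fin d → ℝ => dotp w x := measurable_dotp x
      fun_prop), vec_mgf x hx l, vec_mgf x hx (-l),
      (show (-l) ^ 2 = l ^ 2 by ring), ← two_mul, ← mul_assoc,
      ENNReal.inv_mul_cancel two_ne_zero ENNReal.ofNat_ne_top, one_mul]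
  rw [Finset.prod_congr rfl fun s _ => hsingle, Finset.prod_const, Finset.card_univ,
    Fintype.card_fin, ← ENNReal.ofReal_pow (Real.exp_nonneg _), ← Real.exp_nat_mul]
  apply ENNReal.ofReal_le_ofReal
  apply Real.exp_le_exp.mpr
  apply le_of_eq
  ring

-- Chernoff upper tail
lemma chernoff_upper (d m : ℕ) (x : Fin d → ℝ) (hx : ∑ i, x i ^ 2 = 1) (l r : ℝ) (hl : 0 ≤ l) :
    initMeasure m d {p | r ≤ ∑ s, signOf (p.2 s) * max 0 (dotp (p.1 s) x)} ≤
      ENNReal.ofReal (Real.exp (m * l ^ 2 / 2 - l * r)) := by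
  set S := fun p : (Fin m → Fin d → ℝ) × (Fin m → Bool) =>
      ∑ s, signOf (p.2 s) * max 0 (dotp (p.1 s) x) with hS
  have hf : Measurable fun p => ENNReal.ofReal (Real.exp (l * S p)) :=
    ENNReal.measurable_ofReal.comp (Real.measurable_exp.comp ((measurable_S x).const_mul l))
  have hsub : {p | r ≤ S p} ⊆
      {p | ENNReal.ofReal (Real.exp (l * r)) ≤ ENNReal.ofReal (Real.exp (l * S p))} :=
    fun p hp => ENNReal.ofReal_le_ofReal (Real.exp_le_exp.mpr (mul_le_mul_of_nonneg_left hp hl))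
  have h1 := mul_meas_ge_le_lintegral₀ (μ := initMeasure m d) hf.aemeasurable
    (ENNReal.ofReal (Real.exp (l * r)))
  have h2 : ENNReal.ofReal (Real.exp (l * r)) *
      initMeasure m d {p | r ≤ S p} ≤ ENNReal.ofReal (Real.exp (m * l ^ 2 / 2)) :=
    le_trans (mul_le_mul_right (measure_mono hsub) _) (h1.trans (mgf_bound d m x hx l))
  have hεpos : (0:ℝ≥0∞) < ENNReal.ofReal (Real.exp (l * r)) :=
    ENNReal.ofReal_pos.mpr (Real.exp_pos _)
  rw [show Real.exp (m * l ^ 2 / 2 - l * r) =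
    Real.exp (m * l ^ 2 / 2) / Real.exp (l * r) from Real.exp_sub _ _,
    ENNReal.ofReal_div_of_pos (Real.exp_pos _)]
  rw [ENNReal.le_div_iff_mul_le (Or.inl hεpos.ne') (Or.inl ENNReal.ofReal_ne_top)]
  rwa [mul_comm]

lemma chernoff_lower (d m : ℕ) (x : Fin d → ℝ) (hx : ∑ i, x i ^ 2 = 1) (l r : ℝ) (hl : 0 ≤ l) :
    initMeasure m d {p | (∑ s, signOf (p.2 s) * max 0 (dotp (p.1 s) x)) ≤ -r} ≤
      ENNReal.ofReal (Real.exp (m * l ^ 2 / 2 - l * r)) := by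
  set S := fun p : (Fin m → Fin d → ℝ) × (Fin m → Bool) =>
      ∑ s, signOf (p.2 s) * max 0 (dotp (p.1 s) x) with hS
  have hf : Measurable fun p => ENNReal.ofReal (Real.exp ((-l) * S p)) :=
    ENNReal.measurable_ofReal.comp (Real.measurable_exp.comp ((measurable_S x).const_mul (-l)))
  have hsub : {p | S p ≤ -r} ⊆
      {p | ENNReal.ofReal (Real.exp (l * r)) ≤ ENNReal.ofReal (Real.exp ((-l) * S p))} := by
    intro p hp
    have hp' : S p ≤ -r := hp
    refine ENNReal.ofReal_le_ofReal (Real.exp_le_exp.mpr ?_)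
    have : l * r ≤ l * (-S p) := mul_le_mul_of_nonneg_left (by linarith) hl
    nlinarith
  have h1 := mul_meas_ge_le_lintegral₀ (μ := initMeasure m d) hf.aemeasurable
    (ENNReal.ofReal (Real.exp (l * r)))
  have hmgf := mgf_bound d m x hx (-l)
  rw [show (m : ℝ) * (-l) ^ 2 / 2 = m * l ^ 2 / 2 by ring] at hmgf
  have h2 : ENNReal.ofReal (Real.exp (l * r)) *
      initMeasure m d {p | S p ≤ -r} ≤ ENNReal.ofReal (Real.exp (m * l ^ 2 / 2)) :=
    le_trans (mul_le_mul_right (measure_mono hsub) _) (h1.trans hmgf)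
  have hεpos : (0:ℝ≥0∞) < ENNReal.ofReal (Real.exp (l * r)) :=
    ENNReal.ofReal_pos.mpr (Real.exp_pos _)
  rw [show Real.exp (m * l ^ 2 / 2 - l * r) =
    Real.exp (m * l ^ 2 / 2) / Real.exp (l * r) from Real.exp_sub _ _,
    ENNReal.ofReal_div_of_pos (Real.exp_pos _)]
  rw [ENNReal.le_div_iff_mul_le (Or.inl hεpos.ne') (Or.inl ENNReal.ofReal_ne_top)]
  rwa [mul_comm]

lemma abs_dotp_le {d : ℕ} (u v : Fin d → ℝ) : |dotp u v| ≤ euclNorm u * euclNorm v := by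
  have h := Finset.sum_mul_sq_le_sq_mul_sq Finset.univ u v
  have h1 : |dotp u v| = Real.sqrt ((dotp u v) ^ 2) := (Real.sqrt_sq_eq_abs _).symm
  rw [h1, euclNorm, euclNorm, ← Real.sqrt_mul (by positivity)]
  exact Real.sqrt_le_sqrt h

lemma abs_signOf (b : Bool) : |signOf b| = 1 := by cases b <;> simp [signOf]

lemma det_bound {m d : ℕ} (hm : 1 ≤ m) (x : Fin d → ℝ) (hx1 : euclNorm x = 1)
    (a : Fin m → Bool) (W0 W : Fin m → Fin d → ℝ) (C0 : ℝ) (hC0 : 0 ≤ C0)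
    (hball : inBall W0 W (C0 / Real.sqrt m)) :
    |netF a W x| ≤ |netF a W0 x| + C0 := by
  have hmpos : (0:ℝ) < m := by exact_mod_cast hm
  have hsm : (0:ℝ) < Real.sqrt m := Real.sqrt_pos.mpr hmpos
  have key : |netF a W x - netF a W0 x| ≤ C0 := by
    have hdiff : netF a W x - netF a W0 x =
        (1 / Real.sqrt m) * ∑ s, signOf (a s) *
          (max 0 (dotp (W s) x) - max 0 (dotp (W0 s) x)) := by
      unfold netF
      rw [← mul_sub, ← Finset.sum_sub_distrib]
      congr 1
      exact Finset.sum_congr rfl fun s _ => by ring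
    rw [hdiff, abs_mul]
    have habs1 : |1 / Real.sqrt m| = 1 / Real.sqrt m := abs_of_pos (by positivity)
    rw [habs1]
    have hterm : ∀ s : Fin m, |signOf (a s) *
        (max 0 (dotp (W s) x) - max 0 (dotp (W0 s) x))| ≤ C0 / Real.sqrt m := by
      intro s
      rw [abs_mul, abs_signOf, one_mul]
      have h2 : |max 0 (dotp (W s) x) - max 0 (dotp (W0 s) x)| ≤
          |dotp (W s) x - dotp (W0 s) x| := by
        rw [max_comm 0 (dotp (W s) x), max_comm 0 (dotp (W0 s) x)]
        exact abs_max_sub_max_le_abs _ _ _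
      refine h2.trans ?_
      have h3 : dotp (W s) x - dotp (W0 s) x = dotp (fun i => W s i - W0 s i) x := by
        unfold dotp
        rw [← Finset.sum_sub_distrib]
        exact Finset.sum_congr rfl fun i _ => by ring
      rw [h3]
      refine (abs_dotp_le _ _).trans ?_
      rw [hx1, mul_one]
      exact hball s
    have hsum : |∑ s, signOf (a s) * (max 0 (dotp (W s) x) - max 0 (dotp (W0 s) x))| ≤
        m * (C0 / Real.sqrt m) := by
      refine (Finset.abs_sum_le_sum_abs _ _).trans ?_
      calc ∑ s, |signOf (a s) * (max 0 (dotp (W s) x) - max 0 (dotp (W0 s) x))|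
          ≤ ∑ _s : Fin m, C0 / Real.sqrt m := Finset.sum_le_sum fun s _ => hterm s
        _ = m * (C0 / Real.sqrt m) := by rw [Finset.sum_const, Finset.card_univ,
            Fintype.card_fin, nsmul_eq_mul]
    calc (1 / Real.sqrt m) * |∑ s, signOf (a s) *
          (max 0 (dotp (W s) x) - max 0 (dotp (W0 s) x))|
        ≤ (1 / Real.sqrt m) * (m * (C0 / Real.sqrt m)) := by
          exact mul_le_mul_of_nonneg_left hsum (by positivity)
      _ = C0 * (m / (Real.sqrt m * Real.sqrt m)) := by ring
      _ = C0 := by rw [Real.mul_self_sqrt hmpos.le, div_self hmpos.ne', mul_one]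
  calc |netF a W x| = |netF a W0 x + (netF a W x - netF a W0 x)| := by ring_nf
    _ ≤ |netF a W0 x| + |netF a W x - netF a W0 x| := abs_add_le _ _
    _ ≤ |netF a W0 x| + C0 := by linarith

/-- Lemma bounding the function value: there is a universal constant
`C > 0` such that if `m ≥ C·log(2/γ)`, then with probability at least `1 - γ`,
`|f(x; a, W)| ≤ 2·√(log(2/γ)) + C₀` simultaneously for all `W` in the lazy-regime ball. -/
theorem function_value_bound :
    ∃ C : ℝ, 0 < C ∧
      ∀ (d m : ℕ) (x : Fin d → ℝ) (γ C0 : ℝ),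
        euclNorm x = 1 → 0 < γ → γ < 1 → 0 < C0 →
        C * Real.log (2 / γ) ≤ (m : ℝ) →
        ENNReal.ofReal (1 - γ) ≤
          initMeasure m d
            {p | ∀ W : Fin m → Fin d → ℝ, inBall p.1 W (C0 / Real.sqrt m) →
              |netF p.2 W x| ≤ 2 * Real.sqrt (Real.log (2 / γ)) + C0} := by
  refine ⟨1, one_pos, ?_⟩
  intro d m x γ C0 hx1 hγ0 hγ1 hC0 hmC
  set L := Real.log (2 / γ) with hLdef
  have hL : 0 < L := Real.log_pos (by rw [lt_div_iff₀ hγ0]; linarith)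
  have hmpos : (0:ℝ) < m := lt_of_lt_of_le (by linarith) hmC
  have hm1 : 1 ≤ m := by exact_mod_cast Nat.one_le_iff_ne_zero.mpr (by
    intro h; rw [h] at hmpos; simp at hmpos)
  have hx2 : ∑ i, x i ^ 2 = 1 := by
    have := hx1
    rw [euclNorm] at this
    nlinarith [Real.sq_sqrt (show (0:ℝ) ≤ ∑ i, x i ^ 2 by positivity),
      Real.sqrt_nonneg (∑ i, x i ^ 2)]
  have hsm : (0:ℝ) < Real.sqrt m := Real.sqrt_pos.mpr hmpos
  set t := 2 * Real.sqrt L with htdef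
  have ht : 0 < t := by positivity
  have ht2 : t ^ 2 = 4 * L := by
    rw [htdef, mul_pow, Real.sq_sqrt hL.le]; ring
  set S := fun p : (Fin m → Fin d → ℝ) × (Fin m → Bool) =>
      ∑ s, signOf (p.2 s) * max 0 (dotp (p.1 s) x) with hSdef
  set B := {p : (Fin m → Fin d → ℝ) × (Fin m → Bool) | t * Real.sqrt m ≤ |S p|} with hBdef
  have hBmeas : MeasurableSet B :=
    measurableSet_le measurable_const (measurable_S x).abs
  -- the exponent computation
  have hexp : (m : ℝ) * (t / Real.sqrt m) ^ 2 / 2 - (t / Real.sqrt m) * (t * Real.sqrt m)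
      = -(2 * L) := by
    have hss : Real.sqrt m * Real.sqrt m = m := Real.mul_self_sqrt hmpos.le
    field_simp
    nlinarith [hss]
  have hγv : Real.exp (-(2*L)) = γ ^ 2 / 4 := by
    have hEL : Real.exp L = 2 / γ := Real.exp_log (by positivity)
    rw [show -(2*L) = -(L + L) by ring, Real.exp_neg, Real.exp_add, hEL]
    field_simp
    ring
  have hl0 : 0 ≤ t / Real.sqrt m := by positivity
  have hup := chernoff_upper d m x hx2 (t / Real.sqrt m) (t * Real.sqrt m) hl0
  have hlow := chernoff_lower d m x hx2 (t / Real.sqrt m) (t * Real.sqrt m) hl0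
  rw [hexp, hγv] at hup hlow
  have hBsub : B ⊆ {p | t * Real.sqrt m ≤ S p} ∪ {p | S p ≤ -(t * Real.sqrt m)} := by
    intro p hp
    have hp' : t * Real.sqrt m ≤ |S p| := hp
    rcases le_abs.mp hp' with h | h
    · exact Or.inl h
    · exact Or.inr (show S p ≤ -(t * Real.sqrt m) by linarith)
  have hBle : initMeasure m d B ≤ ENNReal.ofReal γ := by
    calc initMeasure m d B
        ≤ initMeasure m d ({p | t * Real.sqrt m ≤ S p} ∪ {p | S p ≤ -(t * Real.sqrt m)}) :=
          measure_mono hBsub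
      _ ≤ initMeasure m d {p | t * Real.sqrt m ≤ S p} +
          initMeasure m d {p | S p ≤ -(t * Real.sqrt m)} := measure_union_le _ _
      _ ≤ ENNReal.ofReal (γ ^ 2 / 4) + ENNReal.ofReal (γ ^ 2 / 4) := add_le_add hup hlow
      _ = ENNReal.ofReal (γ ^ 2 / 4 + γ ^ 2 / 4) := (ENNReal.ofReal_add (by positivity)
          (by positivity)).symm
      _ ≤ ENNReal.ofReal γ := ENNReal.ofReal_le_ofReal (by nlinarith)
  -- good event inclusion
  have hsub2 : Bᶜ ⊆ {p : (Fin m → Fin d → ℝ) × (Fin m → Bool) |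
      ∀ W : Fin m → Fin d → ℝ, inBall p.1 W (C0 / Real.sqrt m) →
        |netF p.2 W x| ≤ 2 * Real.sqrt L + C0} := by
    intro p hp W hW
    have hp' : |S p| ≤ t * Real.sqrt m := le_of_not_ge hp
    have hnet0 : |netF p.2 p.1 x| ≤ t := by
      have : netF p.2 p.1 x = (1 / Real.sqrt m) * S p := rfl
      rw [this, abs_mul, abs_of_pos (show (0:ℝ) < 1 / Real.sqrt m by positivity)]
      calc (1 / Real.sqrt m) * |S p| ≤ (1 / Real.sqrt m) * (t * Real.sqrt m) :=
            mul_le_mul_of_nonneg_left hp' (by positivity)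
        _ = t := by field_simp
    have := det_bound hm1 x hx1 p.2 p.1 W C0 hC0.le hW
    calc |netF p.2 W x| ≤ |netF p.2 p.1 x| + C0 := this
      _ ≤ t + C0 := by linarith
      _ = 2 * Real.sqrt L + C0 := by rw [htdef]
  calc ENNReal.ofReal (1 - γ) = 1 - ENNReal.ofReal γ := by
        rw [ENNReal.ofReal_sub 1 hγ0.le, ENNReal.ofReal_one]
    _ ≤ 1 - initMeasure m d B := tsub_le_tsub_left hBle 1
    _ = initMeasure m d Bᶜ := (prob_compl_eq_one_sub hBmeas).symm
    _ ≤ _ := measure_mono hsub2
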